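/- Let p be a positive integer, 0 ≤ γ < p, and 0 < β ≤ 1. Let H be analytic on 𝔻 with H(0) = p. Then H satisfies |H(z) - p| < β |(p - 2γ) + H(z)| for all z ∈ 𝔻 if and only if there exists an analytic function φ on 𝔻 with |φ(z)| ≤ β for all z ∈ 𝔻 such that H(z) = ( p - (p-2γ) z φ(z) ) / ( 1 + z φ(z) ) for all z ∈ 𝔻. -/

import Mathlib

open Complex Metric

/-- Lemma 2: an analytic function `H` on the unit disk with `H(0) = p` satisfies
`|H(z) - p| < β |(p-2γ) + H(z)|` on the disk if and only if
`H(z) = (p - (p-2γ) z φ(z)) / (1 + z φ(z))` for some analytic `φ` with `|φ| ≤ β`. -/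
theorem lemma_Padmanabhan
    (p : ℕ) (hp : 0 < p) (γ : ℝ) (hγ0 : 0 ≤ γ) (hγp : γ < p)
    (β : ℝ) (hβ0 : 0 < β) (hβ1 : β ≤ 1)
    (H : ℂ → ℂ) (hH : AnalyticOnNhd ℂ H (ball (0 : ℂ) 1)) (hH0 : H 0 = (p : ℂ)) :
    (∀ z ∈ ball (0 : ℂ) 1,
        ‖H z - (p : ℂ)‖ <
          β * ‖((p : ℂ) - 2 * (γ : ℂ)) + H z‖) ↔
      (∃ φ : ℂ → ℂ, AnalyticOnNhd ℂ φ (ball (0 : ℂ) 1) ∧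
        (∀ z ∈ ball (0 : ℂ) 1, ‖φ z‖ ≤ β) ∧
        (∀ z ∈ ball (0 : ℂ) 1,
          H z = ((p : ℂ) - ((p : ℂ) - 2 * (γ : ℂ)) * z * φ z) / (1 + z * φ z))) := by
  have hc : (0:ℝ) < 2 * p - 2 * γ := by linarith
  constructor
  · intro h
    set d : ℂ → ℂ := fun z => ((p : ℂ) - 2 * (γ : ℂ)) + H z with hd_def
    have hd : ∀ z ∈ ball (0 : ℂ) 1, d z ≠ 0 := by
      intro z hz hzero
      have h1 : ‖H z - (p:ℂ)‖ < β * ‖d z‖ := h z hz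
      rw [hzero] at h1
      simp only [norm_zero, mul_zero] at h1
      exact absurd h1 (norm_nonneg _).not_gt
    set w : ℂ → ℂ := fun z => ((p : ℂ) - H z) / d z with hw_def
    have hw0 : w 0 = 0 := by
      simp [hw_def, hd_def, hH0]
    have hwan : AnalyticOnNhd ℂ w (ball (0 : ℂ) 1) :=
      AnalyticOnNhd.div ((analyticOnNhd_const).sub hH)
        ((analyticOnNhd_const).add hH) hd
    have hwlt : ∀ z ∈ ball (0 : ℂ) 1, ‖w z‖ < β := by
      intro z hz
      have hdz : 0 < ‖d z‖ := by
        exact norm_pos_iff.mpr (hd z hz)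
      have hwzval : w z = ((p:ℂ) - H z) / d z := rfl
      rw [hwzval, norm_div, div_lt_iff₀ hdz]
      calc ‖(p:ℂ) - H z‖ = ‖H z - (p:ℂ)‖ :=
            norm_sub_rev _ _
        _ < β * ‖d z‖ := h z hz
    have hmaps : Set.MapsTo w (ball (0 : ℂ) 1) (ball (w 0) β) := by
      intro z hz
      rw [hw0, mem_ball_zero_iff]
      exact hwlt z hz
    have hdiff : DifferentiableOn ℂ w (ball (0 : ℂ) 1) := hwan.differentiableOn
    refine ⟨dslope w 0, ?_, ?_, ?_⟩
    · intro z hz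
      rcases eq_or_ne z 0 with rfl | hz0
      · obtain ⟨q, hq⟩ := hwan 0 hz
        exact (hq.has_fpower_series_dslope_fslope).analyticAt
      · have han : AnalyticAt ℂ (fun y => y⁻¹ * (w y - w 0)) z :=
          ((analyticAt_id.inv hz0)).mul ((hwan z hz).sub analyticAt_const)
        apply han.congr
        have hev : ∀ᶠ y in nhds z, y ≠ (0:ℂ) := isOpen_ne.eventually_mem hz0
        filter_upwards [hev] with y hy
        rw [dslope_of_ne _ hy, slope_def_field]
        field_simp
        ring
    · intro z hz
      have := Complex.norm_dslope_le_div_of_mapsTo_ball hdiff (hmaps.mono_right ball_subset_closedBall) hz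
      simpa using this
    · intro z hz
      have hwz : w z = z * dslope w 0 z := by
        rcases eq_or_ne z 0 with rfl | hz0
        · simp [hw0]
        · rw [dslope_of_ne _ hz0, slope_def_field, hw0]
          field_simp
          ring
      have hne : (1 : ℂ) + w z ≠ 0 := by
        intro hcon
        have h1 : ‖w z‖ = 1 := by
          have hval : w z = -1 := by linear_combination hcon
          simp [hval]
        have h2 := hwlt z hz
        rw [h1] at h2
        linarith
      have key : H z * (1 + w z) = (p:ℂ) - ((p:ℂ) - 2*(γ:ℂ)) * w z := by
        have hwzval : w z = ((p:ℂ) - H z) / (((p : ℂ) - 2 * (γ : ℂ)) + H z) := rfl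
        have hdz : ((p : ℂ) - 2 * (γ : ℂ)) + H z ≠ 0 := hd z hz
        rw [hwzval]
        field_simp
        ring
      have hne' : (1 : ℂ) + z * dslope w 0 z ≠ 0 := by rw [← hwz]; exact hne
      rw [eq_div_iff hne', mul_assoc ((p:ℂ) - 2*(γ:ℂ)) z, ← hwz]
      exact key
  · rintro ⟨φ, hφa, hφb, hφe⟩ z hz
    set u : ℂ := z * φ z with hu_def
    have huβ : ‖u‖ < β := by
      have hz1 : ‖z‖ < 1 := by simpa using hz
      calc ‖u‖ = ‖z‖ * ‖φ z‖ := norm_mul _ _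
        _ ≤ ‖z‖ * β :=
            mul_le_mul_of_nonneg_left (hφb z hz) (norm_nonneg z)
        _ < 1 * β := mul_lt_mul_of_pos_right hz1 hβ0
        _ = β := one_mul β
    have hu1 : (1 : ℂ) + u ≠ 0 := by
      intro hcon
      have hval : u = -1 := by linear_combination hcon
      rw [hval] at huβ
      simp at huβ
      linarith
    have e1 : H z - (p : ℂ) = -((((2:ℂ)) * p - 2 * γ) * u) / (1 + u) := by
      rw [hφe z hz, ← hu_def]
      field_simp
      ring
    have e2 : ((p : ℂ) - 2 * (γ : ℂ)) + H z = (((2:ℂ)) * p - 2 * γ) / (1 + u) := by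
      rw [hφe z hz, ← hu_def]
      field_simp
      ring
    have hA : ‖((2:ℂ)) * p - 2 * γ‖ = 2 * p - 2 * γ := by
      have hcast : ((2:ℂ)) * p - 2 * γ = ((2 * p - 2 * γ : ℝ) : ℂ) := by push_cast; ring
      rw [hcast, Complex.norm_real, Real.norm_eq_abs, abs_of_pos hc]
    have hB : 0 < ‖1 + u‖ := by
      exact norm_pos_iff.mpr hu1
    rw [e1, e2, norm_div, norm_div, norm_neg, norm_mul, hA,
      ← mul_div_assoc, div_lt_div_iff₀ hB hB]
    nlinarith [norm_nonneg u, mul_lt_mul_of_pos_right huβ hc]
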